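/- Define Ψ(x) = ∫_{−∞}^{x} F₀(y)²/(σ(y)² f₀(y)) dy + (F₀(x)/(F₀(x) − 1))² · ∫_{x}^{∞} (F₀(y) − 1)²/(σ(y)² f₀(y)) dy. If Φ(x) < ∞ for all x ∈ ℝ (so that all the integrals appearing in Ψ are finite), then Ψ is differentiable at every x with Ψ′(x) = 2 F₀(x) f₀(x) (1 − F₀(x))^{−3} · ∫_{x}^{∞} (1 − F₀(y))²/(σ(y)² f₀(y)) dy; in particular Ψ′(x) > 0 for every x, so Ψ is strictly increasing on ℝ. -/

import Mathlib

open MeasureTheory Set Filter Topology ENNReal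

theorem stmt_5
    (σ f₀ : ℝ → ℝ)
    (hσc : Continuous σ) (hσpos : ∀ x, 0 < σ x)
    (hf₀c : Continuous f₀) (hf₀pos : ∀ x, 0 < f₀ x)
    (hf₀int : ∫ x, f₀ x = 1)
    (F₀ : ℝ → ℝ) (hF₀ : ∀ x, F₀ x = ∫ y in Iic x, f₀ y)
    (hF₀bdd : ∀ x, 0 < F₀ x ∧ F₀ x < 1)
    (Φ : ℝ → ℝ≥0∞)
    (hΦ : ∀ x, Φ x = ∫⁻ y, ENNReal.ofReal
        (((Ioi x).indicator (fun _ => (1 : ℝ)) y - F₀ y) ^ 2 / (σ y ^ 2 * f₀ y)))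
    (hΦfin : ∀ x, Φ x < ⊤)
    (Ψ : ℝ → ℝ)
    (hΨ : ∀ x, Ψ x =
      (∫ y in Iic x, F₀ y ^ 2 / (σ y ^ 2 * f₀ y)) +
        (F₀ x / (F₀ x - 1)) ^ 2 * ∫ y in Ioi x, (F₀ y - 1) ^ 2 / (σ y ^ 2 * f₀ y)) :
    (∀ x, HasDerivAt Ψ
        (2 * F₀ x * f₀ x * ((1 - F₀ x) ^ 3)⁻¹ *
          ∫ y in Ioi x, (1 - F₀ y) ^ 2 / (σ y ^ 2 * f₀ y)) x) ∧
      (∀ x, 0 < 2 * F₀ x * f₀ x * ((1 - F₀ x) ^ 3)⁻¹ *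
          ∫ y in Ioi x, (1 - F₀ y) ^ 2 / (σ y ^ 2 * f₀ y)) ∧
      StrictMono Ψ := by
  set g : ℝ → ℝ := fun y => F₀ y ^ 2 / (σ y ^ 2 * f₀ y) with hgdef
  set h : ℝ → ℝ := fun y => (F₀ y - 1) ^ 2 / (σ y ^ 2 * f₀ y) with hhdef
  have hden : ∀ y, σ y ^ 2 * f₀ y ≠ 0 := fun y =>
    (mul_pos (pow_pos (hσpos y) 2) (hf₀pos y)).ne'
  have hdenpos : ∀ y, 0 < σ y ^ 2 * f₀ y := fun y =>
    mul_pos (pow_pos (hσpos y) 2) (hf₀pos y)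
  have hdenc : Continuous fun y => σ y ^ 2 * f₀ y := (hσc.pow 2).mul hf₀c
  have hf₀i : Integrable f₀ := integrable_of_integral_eq_one hf₀int
  -- F₀ is differentiable with derivative f₀
  have hF₀eq : ∀ x : ℝ, F₀ x = F₀ 0 + ∫ t in (0:ℝ)..x, f₀ t := by
    intro x
    have := intervalIntegral.integral_Iic_sub_Iic (hf₀i.integrableOn (s := Iic 0))
      (hf₀i.integrableOn (s := Iic x))
    rw [hF₀ x, hF₀ 0] at *
    linarith [this]
  have hF₀d : ∀ x : ℝ, HasDerivAt F₀ (f₀ x) x := by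
    intro x
    have : HasDerivAt (fun u => F₀ 0 + ∫ t in (0:ℝ)..u, f₀ t) (f₀ x) x := by
      refine HasDerivAt.const_add _ ?_
      exact intervalIntegral.integral_hasDerivAt_right
        (hf₀c.intervalIntegrable _ _)
        (hf₀c.stronglyMeasurable.stronglyMeasurableAtFilter)
        hf₀c.continuousAt
    exact this.congr_of_eventuallyEq (Eventually.of_forall fun u => (hF₀eq u))
  have hF₀c : Continuous F₀ := by
    rw [continuous_iff_continuousAt]; exact fun x => (hF₀d x).continuousAt
  have hgc : Continuous g := (hF₀c.pow 2).div hdenc hden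
  have hhc : Continuous h := ((hF₀c.sub continuous_const).pow 2).div hdenc hden
  have hgpos : ∀ y, 0 < g y := fun y =>
    div_pos (pow_pos (hF₀bdd y).1 2) (hdenpos y)
  have hhpos : ∀ y, 0 < h y := fun y => by
    have : F₀ y - 1 ≠ 0 := sub_ne_zero.mpr (hF₀bdd y).2.ne
    exact div_pos (by positivity) (hdenpos y)
  -- integrability from finiteness of Φ
  have hgint : ∀ x, IntegrableOn g (Iic x) := by
    intro x
    refine ⟨hgc.aestronglyMeasurable.restrict, ?_⟩
    rw [hasFiniteIntegral_iff_ofReal (Eventually.of_forall fun y => (hgpos y).le)]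
    have key : ∫⁻ y in Iic x, ENNReal.ofReal (g y) ≤ Φ x := by
      rw [hΦ x]
      calc ∫⁻ y in Iic x, ENNReal.ofReal (g y)
          = ∫⁻ y in Iic x, ENNReal.ofReal
            (((Ioi x).indicator (fun _ => (1:ℝ)) y - F₀ y) ^ 2 / (σ y ^ 2 * f₀ y)) := by
            refine setLIntegral_congr_fun measurableSet_Iic (fun y hy => ?_)
            rw [indicator_of_notMem (by simpa using hy)]
            norm_num [hgdef]
        _ ≤ _ := setLIntegral_le_lintegral _ _
    exact lt_of_le_of_lt key (hΦfin x)
  have hhint : ∀ x, IntegrableOn h (Ioi x) := by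
    intro x
    refine ⟨hhc.aestronglyMeasurable.restrict, ?_⟩
    rw [hasFiniteIntegral_iff_ofReal (Eventually.of_forall fun y => (hhpos y).le)]
    have key : ∫⁻ y in Ioi x, ENNReal.ofReal (h y) ≤ Φ x := by
      rw [hΦ x]
      calc ∫⁻ y in Ioi x, ENNReal.ofReal (h y)
          = ∫⁻ y in Ioi x, ENNReal.ofReal
            (((Ioi x).indicator (fun _ => (1:ℝ)) y - F₀ y) ^ 2 / (σ y ^ 2 * f₀ y)) := by
            refine setLIntegral_congr_fun measurableSet_Ioi (fun y hy => ?_)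
            rw [indicator_of_mem hy]
            rw [hhdef]
            ring_nf
        _ ≤ _ := setLIntegral_le_lintegral _ _
    exact lt_of_le_of_lt key (hΦfin x)
  -- decompositions
  have hA : ∀ x : ℝ, (∫ y in Iic x, g y) = (∫ y in Iic 0, g y) + ∫ t in (0:ℝ)..x, g t := by
    intro x
    have := intervalIntegral.integral_Iic_sub_Iic (hgint 0) (hgint x)
    linarith [this]
  have hsplit : ∀ a b : ℝ, a ≤ b →
      (∫ y in Ioi a, h y) = (∫ y in Ioc a b, h y) + ∫ y in Ioi b, h y := by
    intro a b hab
    rw [← setIntegral_union (Ioc_disjoint_Ioi le_rfl) measurableSet_Ioi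
      ((hhint a).mono_set Ioc_subset_Ioi_self) (hhint b), Ioc_union_Ioi_eq_Ioi hab]
  have hB : ∀ x : ℝ, (∫ y in Ioi x, h y) = (∫ y in Ioi 0, h y) - ∫ t in (0:ℝ)..x, h t := by
    intro x
    rcases le_total 0 x with hx | hx
    · rw [hsplit 0 x hx, intervalIntegral.integral_of_le hx]; ring
    · rw [hsplit x 0 hx, intervalIntegral.integral_of_ge hx]; ring
  -- the target integral equals ∫ h
  have hT : ∀ x : ℝ, (∫ y in Ioi x, (1 - F₀ y) ^ 2 / (σ y ^ 2 * f₀ y)) = ∫ y in Ioi x, h y := by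
    intro x
    refine integral_congr_ae (Eventually.of_forall fun y => ?_)
    rw [hhdef]; ring_nf
  have hFne : ∀ x, F₀ x - 1 ≠ 0 := fun x => sub_ne_zero.mpr (hF₀bdd x).2.ne
  -- main derivative
  have key : ∀ x, HasDerivAt Ψ
      (2 * F₀ x * f₀ x * ((1 - F₀ x) ^ 3)⁻¹ * ∫ y in Ioi x, (1 - F₀ y) ^ 2 / (σ y ^ 2 * f₀ y)) x := by
    intro x
    have hG : HasDerivAt (fun u => ∫ t in (0:ℝ)..u, g t) (g x) x :=
      intervalIntegral.integral_hasDerivAt_right (hgc.intervalIntegrable _ _)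
        (hgc.stronglyMeasurable.stronglyMeasurableAtFilter) hgc.continuousAt
    have hH : HasDerivAt (fun u => ∫ t in (0:ℝ)..u, h t) (h x) x :=
      intervalIntegral.integral_hasDerivAt_right (hhc.intervalIntegrable _ _)
        (hhc.stronglyMeasurable.stronglyMeasurableAtFilter) hhc.continuousAt
    have hq : HasDerivAt (fun u => F₀ u / (F₀ u - 1))
        ((f₀ x * (F₀ x - 1) - F₀ x * f₀ x) / (F₀ x - 1) ^ 2) x :=
      (hF₀d x).div ((hF₀d x).sub_const 1) (hFne x)
    have hc : HasDerivAt (fun u => (F₀ u / (F₀ u - 1)) ^ 2)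
        (2 * (F₀ x / (F₀ x - 1)) ^ 1 * ((f₀ x * (F₀ x - 1) - F₀ x * f₀ x) / (F₀ x - 1) ^ 2)) x := by
      simpa using hq.fun_pow 2
    have h2 : HasDerivAt (fun u => (∫ y in Ioi 0, h y) - ∫ t in (0:ℝ)..u, h t) (-(h x)) x :=
      hH.const_sub _
    have h1 : HasDerivAt (fun u => (∫ y in Iic 0, g y) + ∫ t in (0:ℝ)..u, g t) (g x) x :=
      hG.const_add _
    have h3 := h1.add (hc.mul h2)
    have heq : Ψ =ᶠ[𝓝 x] fun u => ((∫ y in Iic 0, g y) + ∫ t in (0:ℝ)..u, g t) +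
        (F₀ u / (F₀ u - 1)) ^ 2 * ((∫ y in Ioi 0, h y) - ∫ t in (0:ℝ)..u, h t) := by
      refine Eventually.of_forall fun u => ?_
      rw [hΨ u, hA u, hB u]
    refine (h3.congr_of_eventuallyEq heq).congr_deriv ?_
    rw [hT x, hB x]
    set Bx := (∫ y in Ioi 0, h y) - ∫ t in (0:ℝ)..x, h t with hBx
    have hgx : g x = F₀ x ^ 2 / (σ x ^ 2 * f₀ x) := rfl
    have hhx : h x = (F₀ x - 1) ^ 2 / (σ x ^ 2 * f₀ x) := rfl
    rw [hgx, hhx]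
    have h13 : (1 - F₀ x) ^ 3 = -((F₀ x - 1) ^ 3) := by ring
    rw [h13]
    field_simp [hFne x, hden x, (hf₀pos x).ne']
    ring
  refine ⟨key, ?_, ?_⟩
  · intro x
    have hpos1 : 0 < 2 * F₀ x * f₀ x * ((1 - F₀ x) ^ 3)⁻¹ := by
      have h1 : 0 < 1 - F₀ x := sub_pos.mpr (hF₀bdd x).2
      have := (hF₀bdd x).1
      have := hf₀pos x
      positivity
    refine mul_pos hpos1 ?_
    rw [hT x]
    rw [setIntegral_pos_iff_support_of_nonneg_ae
      (Eventually.of_forall fun y => (hhpos y).le) (hhint x)]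
    have : Function.support h = univ := by
      ext y; simp [Function.mem_support, (hhpos y).ne']
    rw [this, univ_inter, Real.volume_Ioi]
    exact ENNReal.zero_lt_top
  · apply strictMono_of_deriv_pos
    intro x
    rw [(key x).deriv]
    have hpos1 : 0 < 2 * F₀ x * f₀ x * ((1 - F₀ x) ^ 3)⁻¹ := by
      have h1 : 0 < 1 - F₀ x := sub_pos.mpr (hF₀bdd x).2
      have := (hF₀bdd x).1
      have := hf₀pos x
      positivity
    refine mul_pos hpos1 ?_
    rw [hT x]
    rw [setIntegral_pos_iff_support_of_nonneg_ae
      (Eventually.of_forall fun y => (hhpos y).le) (hhint x)]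
    have : Function.support h = univ := by
      ext y; simp [Function.mem_support, (hhpos y).ne']
    rw [this, univ_inter, Real.volume_Ioi]
    exact ENNReal.zero_lt_top
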